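/- Let m ∈ (0,4] and α > 0. Consider a continuously differentiable solution X = (Φ, W, Q, Z) : [ξ₀, ξ₁] → ℝ⁴ of the system Φ' = Φ(W − 4/m), W' = Q/Φ^{m/3} + W(1−W), Q' = (2/3 + (m−3)W/3)·Q + Z/Φ^{m/3}, Z' = α(W−1)/Φ^{m/3} + (1/3 − (m+3)W/3)·Z, with Φ > 0 on [ξ₀, ξ₁]. If Φ(ξ₀) > 0, W(ξ₀) > 1, Q(ξ₀) > 0 and Z(ξ₀) > 0, then Φ(ξ) > 0, W(ξ) > 1, Q(ξ) > 0 and Z(ξ) > 0 for every ξ ∈ [ξ₀, ξ₁]. Likewise, if Φ(ξ₀) > 0, W(ξ₀) < 1, Q(ξ₀) < 0 and Z(ξ₀) < 0, then Φ(ξ) > 0, W(ξ) < 1, Q(ξ) < 0 and Z(ξ) < 0 for every ξ ∈ [ξ₀, ξ₁]. -/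

import Mathlib

open Set Filter Topology MeasureTheory

noncomputable section

/-- `f` is four-times continuously differentiable on `s`, with successive
derivatives `f1`, `f2`, `f3`, `f4`. -/
def C4On (s : Set ℝ) (f f1 f2 f3 f4 : ℝ → ℝ) : Prop :=
  (∀ y ∈ s, HasDerivWithinAt f (f1 y) s y) ∧
  (∀ y ∈ s, HasDerivWithinAt f1 (f2 y) s y) ∧
  (∀ y ∈ s, HasDerivWithinAt f2 (f3 y) s y) ∧
  (∀ y ∈ s, HasDerivWithinAt f3 (f4 y) s y) ∧
  ContinuousOn f4 s

/-- The self-similar profile ODE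
`α (f − y f') + m f^(m−1) f' f''' + f^m f'''' = 0` on the set `s`,
for a function `f` with successive derivatives `f1`, `f3`, `f4`. -/
def ProfileODE (m α : ℝ) (s : Set ℝ) (f f1 f3 f4 : ℝ → ℝ) : Prop :=
  ∀ y ∈ s,
    α * (f y - y * f1 y) + m * f y ^ (m - 1) * f1 y * f3 y + f y ^ m * f4 y = 0

lemma gron_low {σ θ K : ℝ} {v g : ℝ → ℝ}
    (hv : ∀ x ∈ Icc σ θ, HasDerivWithinAt v (g x) (Icc σ θ) x)
    (hg : ∀ x ∈ Icc σ θ, -K * v x ≤ g x) :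
    ∀ x ∈ Icc σ θ, v σ * Real.exp (-(K * (x - σ))) ≤ v x := by
  intro x hx
  have hσ : σ ∈ Icc σ θ := ⟨le_refl _, le_trans hx.1 hx.2⟩
  have hvc : ContinuousOn v (Icc σ θ) := fun y hy => (hv y hy).continuousWithinAt
  set h : ℝ → ℝ := fun y => v y * Real.exp (K * y) with hh
  have hmono : MonotoneOn h (Icc σ θ) := by
    apply monotoneOn_of_hasDerivWithinAt_nonneg (f' := fun y => (g y + K * v y) * Real.exp (K * y))
      (convex_Icc σ θ) (hvc.mul (Real.continuous_exp.comp (continuous_const.mul continuous_id)).continuousOn)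
    · intro y hy
      have hy' := interior_subset hy
      have hexp : HasDerivAt (fun y : ℝ => Real.exp (K * y)) (Real.exp (K * y) * K) y :=
        by simpa using ((hasDerivAt_id y).const_mul K).exp
      have := ((hv y hy').mono interior_subset).mul (hexp.hasDerivWithinAt)
      exact this.congr_deriv (by ring)
    · intro y hy
      have hy' := interior_subset hy
      have h1 := hg y hy'
      have h2 : 0 ≤ g y + K * v y := by linarith
      positivity
  have h1 : v σ * Real.exp (K * σ) ≤ v x * Real.exp (K * x) := hmono hσ hx hx.1
  have e : Real.exp (-(K * (x - σ))) = Real.exp (K * σ) / Real.exp (K * x) := by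
    rw [show -(K * (x - σ)) = K * σ - K * x by ring, Real.exp_sub]
  rw [e, ← mul_div_assoc, div_le_iff₀ (Real.exp_pos _)]
  linarith

lemma coop_pos {σ τ K : ℝ} (hστ : σ ≤ τ)
    {u B C p q r a b c : ℝ → ℝ}
    (hu : ∀ x ∈ Icc σ τ, HasDerivWithinAt u (p x * u x + a x * B x) (Icc σ τ) x)
    (hB : ∀ x ∈ Icc σ τ, HasDerivWithinAt B (q x * B x + b x * C x) (Icc σ τ) x)
    (hC : ∀ x ∈ Icc σ τ, HasDerivWithinAt C (c x * u x + r x * C x) (Icc σ τ) x)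
    (ha : ∀ x ∈ Icc σ τ, 0 ≤ a x) (hb : ∀ x ∈ Icc σ τ, 0 ≤ b x)
    (hc : ∀ x ∈ Icc σ τ, 0 ≤ c x)
    (hp : ∀ x ∈ Icc σ τ, -K ≤ p x) (hq : ∀ x ∈ Icc σ τ, -K ≤ q x)
    (hr : ∀ x ∈ Icc σ τ, -K ≤ r x)
    (hu0 : 0 < u σ) (hB0 : 0 < B σ) (hC0 : 0 < C σ) :
    ∀ x ∈ Icc σ τ, 0 < u x ∧ 0 < B x ∧ 0 < C x := by
  have hucont : ContinuousOn u (Icc σ τ) := fun y hy => (hu y hy).continuousWithinAt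
  have hBcont : ContinuousOn B (Icc σ τ) := fun y hy => (hB y hy).continuousWithinAt
  have hCcont : ContinuousOn C (Icc σ τ) := fun y hy => (hC y hy).continuousWithinAt
  -- key: nonneg on an initial segment implies strict pos there
  have key : ∀ θ ∈ Icc σ τ, (∀ t ∈ Icc σ θ, 0 ≤ u t ∧ 0 ≤ B t ∧ 0 ≤ C t) →
      ∀ t ∈ Icc σ θ, 0 < u t ∧ 0 < B t ∧ 0 < C t := by
    intro θ hθ hnn
    have hsub : Icc σ θ ⊆ Icc σ τ := Icc_subset_Icc_right hθ.2
    have Hu : ∀ t ∈ Icc σ θ, u σ * Real.exp (-(K * (t - σ))) ≤ u t := by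
      apply gron_low (g := fun x => p x * u x + a x * B x)
        (fun x hx => (hu x (hsub hx)).mono hsub)
      intro x hx
      have h1 := (hnn x hx).1
      have h2 := (hnn x hx).2.1
      have h3 := hp x (hsub hx)
      have h4 := ha x (hsub hx)
      nlinarith
    have HB : ∀ t ∈ Icc σ θ, B σ * Real.exp (-(K * (t - σ))) ≤ B t := by
      apply gron_low (g := fun x => q x * B x + b x * C x)
        (fun x hx => (hB x (hsub hx)).mono hsub)
      intro x hx
      have h1 := (hnn x hx).2.1
      have h2 := (hnn x hx).2.2
      have h3 := hq x (hsub hx)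
      have h4 := hb x (hsub hx)
      nlinarith
    have HC : ∀ t ∈ Icc σ θ, C σ * Real.exp (-(K * (t - σ))) ≤ C t := by
      apply gron_low (g := fun x => c x * u x + r x * C x)
        (fun x hx => (hC x (hsub hx)).mono hsub)
      intro x hx
      have h1 := (hnn x hx).1
      have h2 := (hnn x hx).2.2
      have h3 := hr x (hsub hx)
      have h4 := hc x (hsub hx)
      nlinarith
    intro t ht
    refine ⟨lt_of_lt_of_le ?_ (Hu t ht), lt_of_lt_of_le ?_ (HB t ht),
      lt_of_lt_of_le ?_ (HC t ht)⟩ <;> positivity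
  -- the set of "good" times
  set E : Set ℝ := {x ∈ Icc σ τ | ∀ t ∈ Icc σ x, 0 ≤ u t ∧ 0 ≤ B t ∧ 0 ≤ C t} with hE
  have hσE : σ ∈ E := by
    refine ⟨⟨le_refl _, hστ⟩, ?_⟩
    intro t ht
    have : t = σ := le_antisymm ht.2 ht.1
    rw [this]; exact ⟨hu0.le, hB0.le, hC0.le⟩
  have hbdd : BddAbove E := ⟨τ, fun x hx => hx.1.2⟩
  set θ := sSup E with hθdef
  have hσθ : σ ≤ θ := le_csSup hbdd hσE
  have hθτ : θ ≤ τ := csSup_le ⟨σ, hσE⟩ fun x hx => hx.1.2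
  have hθmem : θ ∈ Icc σ τ := ⟨hσθ, hθτ⟩
  -- nonneg on [σ, θ]
  have hnn : ∀ t ∈ Icc σ θ, 0 ≤ u t ∧ 0 ≤ B t ∧ 0 ≤ C t := by
    intro t ht
    rcases eq_or_lt_of_le ht.2 with heq | hlt
    · -- t = θ
      subst heq
      rcases eq_or_lt_of_le ht.1 with heq2 | hlt2
      · rw [← heq2]; exact ⟨hu0.le, hB0.le, hC0.le⟩
      · -- σ < θ; use continuity from the left
        have hne : (𝓝[Ico σ θ] θ).NeBot := right_nhdsWithin_Ico_neBot hlt2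
        have hIsub : Ico σ θ ⊆ Icc σ τ := fun y hy => ⟨hy.1, le_trans hy.2.le hθτ⟩
        have hmem : ∀ y ∈ Ico σ θ, 0 ≤ u y ∧ 0 ≤ B y ∧ 0 ≤ C y := by
          intro y hy
          obtain ⟨s, hsE, hys⟩ := exists_lt_of_lt_csSup ⟨σ, hσE⟩ hy.2
          exact hsE.2 y ⟨hy.1, hys.le⟩
        refine ⟨?_, ?_, ?_⟩
        · exact ge_of_tendsto ((hucont θ hθmem).mono_left (nhdsWithin_mono _ hIsub))
            (eventually_of_mem self_mem_nhdsWithin fun y hy => (hmem y hy).1)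
        · exact ge_of_tendsto ((hBcont θ hθmem).mono_left (nhdsWithin_mono _ hIsub))
            (eventually_of_mem self_mem_nhdsWithin fun y hy => (hmem y hy).2.1)
        · exact ge_of_tendsto ((hCcont θ hθmem).mono_left (nhdsWithin_mono _ hIsub))
            (eventually_of_mem self_mem_nhdsWithin fun y hy => (hmem y hy).2.2)
    · obtain ⟨s, hsE, hts⟩ := exists_lt_of_lt_csSup ⟨σ, hσE⟩ hlt
      exact hsE.2 t ⟨ht.1, hts.le⟩
  have hposθ : ∀ t ∈ Icc σ θ, 0 < u t ∧ 0 < B t ∧ 0 < C t := key θ hθmem hnn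
  -- θ = τ
  have hθeq : θ = τ := by
    by_contra hne
    have hθlt : θ < τ := lt_of_le_of_ne hθτ hne
    have hposθ' := hposθ θ ⟨hσθ, le_refl _⟩
    have hev : ∀ᶠ x in 𝓝[Icc σ τ] θ, 0 < u x ∧ 0 < B x ∧ 0 < C x := by
      have e1 := (hucont θ hθmem).eventually (eventually_gt_nhds hposθ'.1)
      have e2 := (hBcont θ hθmem).eventually (eventually_gt_nhds hposθ'.2.1)
      have e3 := (hCcont θ hθmem).eventually (eventually_gt_nhds hposθ'.2.2)
      filter_upwards [e1, e2, e3] with x h1 h2 h3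
      exact ⟨h1, h2, h3⟩
    obtain ⟨ε, εpos, hε⟩ := Metric.mem_nhdsWithin_iff.1 hev
    set θ' := min τ (θ + ε / 2) with hθ'
    have hθθ' : θ < θ' := lt_min hθlt (by linarith)
    have hθ'τ : θ' ≤ τ := min_le_left _ _
    have hθ'E : θ' ∈ E := by
      refine ⟨⟨le_trans hσθ hθθ'.le, hθ'τ⟩, ?_⟩
      intro t ht
      rcases le_or_gt t θ with h | h
      · exact hnn t ⟨ht.1, h⟩
      · have htball : t ∈ Metric.ball θ ε := by
          rw [Metric.mem_ball, Real.dist_eq, abs_of_pos (by linarith)]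
          have : t ≤ θ + ε / 2 := le_trans ht.2 (min_le_right _ _)
          linarith
        have htIcc : t ∈ Icc σ τ := ⟨ht.1, le_trans ht.2 hθ'τ⟩
        have := hε ⟨htball, htIcc⟩
        exact ⟨this.1.le, this.2.1.le, this.2.2.le⟩
    have := le_csSup hbdd hθ'E
    rw [← hθdef] at this
    linarith
  rw [hθeq] at hposθ
  exact hposθ

theorem stmt3 (m α : ℝ) (hm0 : 0 < m) (hm4 : m ≤ 4) (hα : 0 < α)
    (ξ₀ ξ₁ : ℝ) (hξ : ξ₀ ≤ ξ₁) (Φ W Q Z : ℝ → ℝ)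
    (hΦpos : ∀ ξ ∈ Icc ξ₀ ξ₁, 0 < Φ ξ)
    (hΦ : ∀ ξ ∈ Icc ξ₀ ξ₁,
      HasDerivWithinAt Φ (Φ ξ * (W ξ - 4 / m)) (Icc ξ₀ ξ₁) ξ)
    (hW : ∀ ξ ∈ Icc ξ₀ ξ₁,
      HasDerivWithinAt W (Q ξ / Φ ξ ^ (m / 3) + W ξ * (1 - W ξ)) (Icc ξ₀ ξ₁) ξ)
    (hQ : ∀ ξ ∈ Icc ξ₀ ξ₁,
      HasDerivWithinAt Q ((2 / 3 + (m - 3) / 3 * W ξ) * Q ξ + Z ξ / Φ ξ ^ (m / 3))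
        (Icc ξ₀ ξ₁) ξ)
    (hZ : ∀ ξ ∈ Icc ξ₀ ξ₁,
      HasDerivWithinAt Z (α * (W ξ - 1) / Φ ξ ^ (m / 3) + (1 / 3 - (m + 3) / 3 * W ξ) * Z ξ)
        (Icc ξ₀ ξ₁) ξ) :
    ((0 < Φ ξ₀ ∧ 1 < W ξ₀ ∧ 0 < Q ξ₀ ∧ 0 < Z ξ₀) →
      ∀ ξ ∈ Icc ξ₀ ξ₁, 0 < Φ ξ ∧ 1 < W ξ ∧ 0 < Q ξ ∧ 0 < Z ξ) ∧
    ((0 < Φ ξ₀ ∧ W ξ₀ < 1 ∧ Q ξ₀ < 0 ∧ Z ξ₀ < 0) →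
      ∀ ξ ∈ Icc ξ₀ ξ₁, 0 < Φ ξ ∧ W ξ < 1 ∧ Q ξ < 0 ∧ Z ξ < 0) := by
  have hξ₀mem : ξ₀ ∈ Icc ξ₀ ξ₁ := ⟨le_refl _, hξ⟩
  -- P = Φ^(m/3) is positive
  have hPpos : ∀ ξ ∈ Icc ξ₀ ξ₁, 0 < Φ ξ ^ (m / 3) := fun ξ hmem =>
    Real.rpow_pos_of_pos (hΦpos ξ hmem) _
  -- bound on W
  have hWcont : ContinuousOn W (Icc ξ₀ ξ₁) := fun y hy => (hW y hy).continuousWithinAt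
  obtain ⟨M, hM⟩ := (isCompact_Icc : IsCompact (Icc ξ₀ ξ₁)).exists_bound_of_continuousOn hWcont
  have hM0 : 0 ≤ M := le_trans (norm_nonneg _) (hM ξ₀ hξ₀mem)
  set K := 2 + 3 * M with hK
  have hWbd : ∀ ξ ∈ Icc ξ₀ ξ₁, -M ≤ W ξ ∧ W ξ ≤ M := by
    intro ξ hmem
    have := hM ξ hmem
    rw [Real.norm_eq_abs] at this
    exact abs_le.1 this
  -- coefficient bounds
  have hpK : ∀ ξ ∈ Icc ξ₀ ξ₁, -K ≤ -W ξ := by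
    intro ξ hmem; have := (hWbd ξ hmem).2; simp only [hK]; linarith
  have hqK : ∀ ξ ∈ Icc ξ₀ ξ₁, -K ≤ 2 / 3 + (m - 3) / 3 * W ξ := by
    intro ξ hmem
    obtain ⟨h1, h2⟩ := hWbd ξ hmem
    simp only [hK]
    nlinarith [mul_nonneg hm0.le (sub_nonneg.2 h2), mul_nonneg hm0.le (by linarith : (0:ℝ) ≤ W ξ + M),
      mul_nonneg (by linarith : (0:ℝ) ≤ 4 - m) (sub_nonneg.2 h2),
      mul_nonneg (by linarith : (0:ℝ) ≤ 4 - m) (by linarith : (0:ℝ) ≤ W ξ + M)]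
  have hrK : ∀ ξ ∈ Icc ξ₀ ξ₁, -K ≤ 1 / 3 - (m + 3) / 3 * W ξ := by
    intro ξ hmem
    obtain ⟨h1, h2⟩ := hWbd ξ hmem
    simp only [hK]
    nlinarith [mul_nonneg hm0.le (sub_nonneg.2 h2), mul_nonneg hm0.le (by linarith : (0:ℝ) ≤ W ξ + M),
      mul_nonneg (by linarith : (0:ℝ) ≤ 4 - m) (sub_nonneg.2 h2),
      mul_nonneg (by linarith : (0:ℝ) ≤ 4 - m) (by linarith : (0:ℝ) ≤ W ξ + M)]
  have haK : ∀ ξ ∈ Icc ξ₀ ξ₁, 0 ≤ (Φ ξ ^ (m / 3))⁻¹ := fun ξ hmem =>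
    (inv_pos.2 (hPpos ξ hmem)).le
  have hcK : ∀ ξ ∈ Icc ξ₀ ξ₁, 0 ≤ α * (Φ ξ ^ (m / 3))⁻¹ := fun ξ hmem =>
    mul_nonneg hα.le (haK ξ hmem)
  constructor
  · rintro ⟨-, hW0, hQ0, hZ0⟩
    have main := coop_pos hξ (u := fun ξ => W ξ - 1) (B := Q) (C := Z)
      (p := fun ξ => -W ξ) (q := fun ξ => 2 / 3 + (m - 3) / 3 * W ξ)
      (r := fun ξ => 1 / 3 - (m + 3) / 3 * W ξ)
      (a := fun ξ => (Φ ξ ^ (m / 3))⁻¹) (b := fun ξ => (Φ ξ ^ (m / 3))⁻¹)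
      (c := fun ξ => α * (Φ ξ ^ (m / 3))⁻¹)
      (fun ξ hmem => by
        have := (hW ξ hmem).sub_const 1
        refine this.congr_deriv ?_
        have hP := (hPpos ξ hmem).ne'
        field_simp
        try ring)
      (fun ξ hmem => by
        have := hQ ξ hmem
        convert this using 1
        have hP := (hPpos ξ hmem).ne'
        field_simp
        try ring)
      (fun ξ hmem => by
        have := hZ ξ hmem
        convert this using 1
        have hP := (hPpos ξ hmem).ne'
        field_simp
        try ring)
      haK haK hcK hpK hqK hrK (show (0:ℝ) < W ξ₀ - 1 by linarith) hQ0 hZ0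
    intro ξ hmem
    obtain ⟨h1, h2, h3⟩ := main ξ hmem
    have h1' : 0 < W ξ - 1 := h1
    exact ⟨hΦpos ξ hmem, by linarith, h2, h3⟩
  · rintro ⟨-, hW0, hQ0, hZ0⟩
    have main := coop_pos hξ (u := fun ξ => 1 - W ξ) (B := fun ξ => -Q ξ) (C := fun ξ => -Z ξ)
      (p := fun ξ => -W ξ) (q := fun ξ => 2 / 3 + (m - 3) / 3 * W ξ)
      (r := fun ξ => 1 / 3 - (m + 3) / 3 * W ξ)
      (a := fun ξ => (Φ ξ ^ (m / 3))⁻¹) (b := fun ξ => (Φ ξ ^ (m / 3))⁻¹)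
      (c := fun ξ => α * (Φ ξ ^ (m / 3))⁻¹)
      (fun ξ hmem => by
        have := (hW ξ hmem).const_sub 1
        refine this.congr_deriv ?_
        have hP := (hPpos ξ hmem).ne'
        field_simp
        try ring)
      (fun ξ hmem => by
        have := (hQ ξ hmem).neg
        refine this.congr_deriv ?_
        have hP := (hPpos ξ hmem).ne'
        field_simp
        try ring)
      (fun ξ hmem => by
        have := (hZ ξ hmem).neg
        refine this.congr_deriv ?_
        have hP := (hPpos ξ hmem).ne'
        field_simp
        try ring)
      haK haK hcK hpK hqK hrK (show (0:ℝ) < 1 - W ξ₀ by linarith) (show (0:ℝ) < -Q ξ₀ by linarith) (show (0:ℝ) < -Z ξ₀ by linarith)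
    intro ξ hmem
    obtain ⟨h1, h2, h3⟩ := main ξ hmem
    have h1' : 0 < 1 - W ξ := h1
    have h2' : 0 < -Q ξ := h2
    have h3' : 0 < -Z ξ := h3
    exact ⟨hΦpos ξ hmem, by linarith, by linarith, by linarith⟩
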